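/- For all x, y, x̂, ŷ ∈ ℝ, |tanh(x̂)·σ(ŷ) − tanh(x)·σ(y)|² ≤ (17/16)·((x̂ − x)² + (ŷ − y)²); i.e., the function G(x,y) = tanh(x)·σ(y) is Lipschitz continuous on ℝ² with Lipschitz constant √(17/16) with respect to the Euclidean norm. -/

import Mathlib

/-- The logistic sigmoid `σ(x) = 1 / (1 + e^{-x})`. -/
noncomputable def sigmoid (x : ℝ) : ℝ := 1 / (1 + Real.exp (-x))

lemma tanh_hasDerivAt (x : ℝ) : HasDerivAt Real.tanh (1 / Real.cosh x ^ 2) x := by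
  have h := (Real.hasDerivAt_sinh x).div (Real.hasDerivAt_cosh x) (Real.cosh_pos x).ne'
  have hc : Real.cosh x * Real.cosh x - Real.sinh x * Real.sinh x = 1 := by
    nlinarith [Real.cosh_sq_sub_sinh_sq x]
  have : (Real.sinh / Real.cosh) = Real.tanh := by
    funext y; rw [Pi.div_apply, Real.tanh_eq_sinh_div_cosh]
  rw [this] at h
  rw [hc] at h
  exact h

lemma tanh_lipschitz : LipschitzWith 1 Real.tanh := by
  apply lipschitzWith_of_nnnorm_deriv_le (fun x => (tanh_hasDerivAt x).differentiableAt)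
  intro x
  rw [(tanh_hasDerivAt x).deriv]
  have h1 : (1:ℝ) ≤ Real.cosh x ^ 2 := by nlinarith [Real.one_le_cosh x]
  have : ‖1 / Real.cosh x ^ 2‖ ≤ 1 := by
    rw [Real.norm_eq_abs, abs_of_nonneg (by positivity)]
    rw [div_le_one (by positivity)]; exact h1
  exact_mod_cast this

lemma tanh_diff_le (a b : ℝ) : |Real.tanh a - Real.tanh b| ≤ |a - b| := by
  have := tanh_lipschitz.dist_le_mul a b
  simpa [Real.dist_eq] using this

lemma sigmoid_eq (x : ℝ) : sigmoid x = (1 + Real.tanh (x / 2)) / 2 := by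
  unfold sigmoid
  rw [Real.tanh_eq_sinh_div_cosh, Real.sinh_eq, Real.cosh_eq]
  have h1 : Real.exp (x/2) > 0 := Real.exp_pos _
  have h2 : Real.exp (-(x/2)) > 0 := Real.exp_pos _
  have h3 : Real.exp (-(x/2)) * Real.exp (-(x/2)) = Real.exp (-x) := by
    rw [← Real.exp_add]; ring_nf
  have h4 : Real.exp (x/2) * Real.exp (-(x/2)) = 1 := by
    rw [← Real.exp_add]; simp
  have h5 : (1:ℝ) + Real.exp (-x) > 0 := by positivity
  have h6 : Real.exp (x/2) * Real.exp (-x) = Real.exp (-x/2) := by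
    rw [← Real.exp_add]; ring_nf
  field_simp
  nlinarith [h3, h4, h6]

lemma tanh_abs_le (x : ℝ) : |Real.tanh x| ≤ 1 := by
  rw [Real.tanh_eq_sinh_div_cosh, abs_div, abs_of_pos (Real.cosh_pos x),
    div_le_one (Real.cosh_pos x)]
  nlinarith [Real.cosh_sq_sub_sinh_sq x, abs_nonneg (Real.sinh x),
    sq_abs (Real.sinh x), Real.cosh_pos x]

lemma sigmoid_abs_le (x : ℝ) : |sigmoid x| ≤ 1 := by
  unfold sigmoid
  have h := Real.exp_pos (-x)
  rw [abs_of_pos (by positivity), div_le_one (by positivity)]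
  linarith

lemma sigmoid_diff_le (a b : ℝ) : |sigmoid a - sigmoid b| ≤ |a - b| / 4 := by
  rw [sigmoid_eq, sigmoid_eq]
  have h := tanh_diff_le (a/2) (b/2)
  have : (1 + Real.tanh (a/2))/2 - (1 + Real.tanh (b/2))/2
      = (Real.tanh (a/2) - Real.tanh (b/2))/2 := by ring
  rw [this, abs_div, abs_of_nonneg (by norm_num : (0:ℝ) ≤ 2)]
  have : |a/2 - b/2| = |a - b|/2 := by
    rw [show a/2 - b/2 = (a-b)/2 by ring, abs_div]; simp
  linarith [this ▸ h]

lemma key (x y xhat yhat : ℝ) :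
    |Real.tanh xhat * sigmoid yhat - Real.tanh x * sigmoid y| ^ 2 ≤
      (17 / 16) * ((xhat - x) ^ 2 + (yhat - y) ^ 2) := by
  have hA : |Real.tanh xhat * sigmoid yhat - Real.tanh x * sigmoid y|
      ≤ |xhat - x| + |yhat - y| / 4 := by
    have h1 : Real.tanh xhat * sigmoid yhat - Real.tanh x * sigmoid y
        = Real.tanh xhat * (sigmoid yhat - sigmoid y)
          + sigmoid y * (Real.tanh xhat - Real.tanh x) := by ring
    rw [h1]
    calc _ ≤ |Real.tanh xhat * (sigmoid yhat - sigmoid y)|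
          + |sigmoid y * (Real.tanh xhat - Real.tanh x)| := abs_add_le _ _
      _ ≤ |xhat - x| + |yhat - y| / 4 := by
        rw [abs_mul, abs_mul]
        have := mul_le_mul (tanh_abs_le xhat) (sigmoid_diff_le yhat y)
          (abs_nonneg _) zero_le_one
        have := mul_le_mul (sigmoid_abs_le y) (tanh_diff_le xhat x)
          (abs_nonneg _) zero_le_one
        nlinarith [abs_nonneg (xhat - x), abs_nonneg (yhat - y),
          mul_le_mul (tanh_abs_le xhat) (sigmoid_diff_le yhat y) (abs_nonneg _) zero_le_one,
          mul_le_mul (sigmoid_abs_le y) (tanh_diff_le xhat x) (abs_nonneg _) zero_le_one]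
  have h0 : (0:ℝ) ≤ |Real.tanh xhat * sigmoid yhat - Real.tanh x * sigmoid y| := abs_nonneg _
  nlinarith [sq_abs (xhat - x), sq_abs (yhat - y), abs_nonneg (xhat - x),
    abs_nonneg (yhat - y), sq_nonneg (|xhat - x| - 4 * |yhat - y|)]

/-- `G(x,y) = tanh(x)·σ(y)` is Lipschitz on `ℝ²` with constant `√(17/16)`
with respect to the Euclidean norm: for all `x, y, x̂, ŷ`,
`|tanh(x̂)·σ(ŷ) − tanh(x)·σ(y)|² ≤ (17/16)·((x̂ − x)² + (ŷ − y)²)`. -/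
theorem tanh_mul_sigmoid_lipschitz :
    (∀ x y xhat yhat : ℝ,
      |Real.tanh xhat * sigmoid yhat - Real.tanh x * sigmoid y| ^ 2 ≤
        (17 / 16) * ((xhat - x) ^ 2 + (yhat - y) ^ 2)) ∧
    LipschitzWith ⟨Real.sqrt (17 / 16), Real.sqrt_nonneg _⟩
      (fun p : EuclideanSpace ℝ (Fin 2) => Real.tanh (p 0) * sigmoid (p 1)) := by
  refine ⟨key, ?_⟩
  apply LipschitzWith.of_dist_le_mul
  intro p q
  have hd : dist p q = Real.sqrt ((p 0 - q 0) ^ 2 + (p 1 - q 1) ^ 2) := by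
    rw [EuclideanSpace.dist_eq, Fin.sum_univ_two]
    simp [Real.dist_eq, sq_abs]
  rw [Real.dist_eq, hd]
  push_cast
  change _ ≤ Real.sqrt (17 / 16) * _
  rw [← Real.sqrt_mul (by norm_num : (0:ℝ) ≤ 17/16)]
  rw [← Real.sqrt_sq (abs_nonneg (Real.tanh (p 0) * sigmoid (p 1) - Real.tanh (q 0) * sigmoid (q 1)))]
  exact Real.sqrt_le_sqrt (key (q 0) (q 1) (p 0) (p 1))
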